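/- Let G be a finite group whose order is square-free. Then two subgroups of G are conjugate in G if and only if they have the same order. -/

import Mathlib

open Pointwise Subgroup

section Helpers

variable {G : Type*} [Group G]

/-- Conjugation preserves cardinality of subgroups. -/
lemma card_conj_smul (g : G) (H : Subgroup G) :
    Nat.card (MulAut.conj g • H : Subgroup G) = Nat.card H := by
  rw [Subgroup.pointwise_smul_def]
  exact (Nat.card_congr (H.equivMapOfInjective _ (MulAut.conj g).injective).toEquiv).symm

lemma card_subgroupOf_of_le {H K : Subgroup G} (h : H ≤ K) :
    Nat.card (H.subgroupOf K) = Nat.card H :=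
  Nat.card_congr (Subgroup.subgroupOfEquivOfLe h).toEquiv

/-- Homomorphisms commute with conjugation of subgroups. -/
lemma map_conj_smul {G' : Type*} [Group G'] (f : G →* G') (g : G) (H : Subgroup G) :
    (MulAut.conj g • H).map f = MulAut.conj (f g) • H.map f := by
  rw [Subgroup.pointwise_smul_def, Subgroup.pointwise_smul_def]
  change Subgroup.map f (Subgroup.map (MulAut.conj g).toMonoidHom H) =
    Subgroup.map (MulAut.conj (f g)).toMonoidHom (Subgroup.map f H)
  rw [Subgroup.map_map, Subgroup.map_map]
  congr 1
  ext x
  simp [MulAut.conj]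

/-- Lift a conjugation inside a subgroup `N` to the ambient group. -/
lemma conj_lift {H K N : Subgroup G} (hHN : H ≤ N) (hKN : K ≤ N) (n : N)
    (h : MulAut.conj n • H.subgroupOf N = K.subgroupOf N) :
    MulAut.conj (n : G) • H = K := by
  rw [Subgroup.conj_smul_subgroupOf hHN] at h
  have := congrArg (Subgroup.map N.subtype) h
  rw [Subgroup.subgroupOf_map_subtype, Subgroup.subgroupOf_map_subtype,
    inf_eq_left.mpr (Subgroup.conj_smul_le_of_le hHN n), inf_eq_left.mpr hKN] at this
  exact this

lemma factorization_eq_one' {n p : ℕ} (hsq : Squarefree n) (hp : p.Prime) (hdvd : p ∣ n) :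
    n.factorization p = 1 :=
  le_antisymm ((Nat.squarefree_iff_factorization_le_one hsq.ne_zero).mp hsq p)
    ((hp.factorization_pos_of_dvd hsq.ne_zero hdvd))

lemma conj_smul_self {J : Subgroup G} {h : G} (hh : h ∈ J) : MulAut.conj h • J = J := by
  refine le_antisymm (Subgroup.conj_smul_le_of_le le_rfl ⟨h, hh⟩) ?_
  rw [Subgroup.subset_pointwise_smul_iff, ← map_inv]
  exact Subgroup.conj_smul_le_of_le le_rfl ⟨h⁻¹, J.inv_mem hh⟩

lemma mem_normalizer_of_conj_smul_eq {g : G} {M : Subgroup G}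
    (h : MulAut.conj g • M = M) : g ∈ normalizer (M : Set G) := by
  rw [Subgroup.mem_normalizer_iff]
  intro x
  constructor
  · intro hx
    have := Subgroup.smul_mem_pointwise_smul x (MulAut.conj g) M hx
    rwa [h] at this
  · intro hx
    rw [← h] at hx
    have : MulAut.conj g • x ∈ MulAut.conj g • M := by
      simpa [MulAut.smul_def] using hx
    exact (Subgroup.smul_mem_pointwise_smul_iff).mp this

end Helpers

/-- A group of squarefree order has a normal subgroup of index `p`, the smallest prime. -/
lemma exists_normal_of_index_minFac (G : Type*) [Group G] [Finite G]
    (hsq : Squarefree (Nat.card G)) (h1 : Nat.card G ≠ 1) :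
    ∃ N : Subgroup G, N.Normal ∧ N.index = (Nat.card G).minFac := by
  set n := Nat.card G with hn
  have hp : n.minFac.Prime := Nat.minFac_prime h1
  set p := n.minFac with hpdef
  haveI : Fact p.Prime := ⟨hp⟩
  obtain ⟨P⟩ : Nonempty (Sylow p G) := Sylow.nonempty
  have hcardP : Nat.card P = p := by
    rw [P.card_eq_multiplicity, factorization_eq_one' hsq hp (Nat.minFac_dvd n), pow_one]
  haveI : IsCyclic (P : Subgroup G) := isCyclic_of_prime_card hcardP
  have hMulAut : Nat.card (MulAut (P : Subgroup G)) = p - 1 := by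
    rw [IsCyclic.card_mulAut, hcardP, Nat.totient_prime hp]
  have hP : normalizer ((P : Subgroup G) : Set G) ≤ Subgroup.centralizer (P : Set G) := by
    intro g hg
    set x : normalizer ((P : Subgroup G) : Set G) := ⟨g, hg⟩
    set a := (P : Subgroup G).normalizerMonoidHom x with ha
    have h1 : orderOf a ∣ p - 1 := hMulAut ▸ orderOf_dvd_natCard a
    have h2 : orderOf a ∣ n := by
      calc orderOf a ∣ orderOf x := orderOf_map_dvd _ x
        _ ∣ Nat.card (normalizer ((P : Subgroup G) : Set G)) := orderOf_dvd_natCard x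
        _ ∣ n := Subgroup.card_subgroup_dvd_card _
    have hord : orderOf a = 1 := by
      by_contra hne
      have hq : (orderOf a).minFac.Prime := Nat.minFac_prime hne
      have hq1 : (orderOf a).minFac ∣ p - 1 := (Nat.minFac_dvd _).trans h1
      have hqn : (orderOf a).minFac ∣ n := (Nat.minFac_dvd _).trans h2
      have hle : p ≤ (orderOf a).minFac := Nat.minFac_le_of_dvd hq.two_le hqn
      have h2le := hp.two_le
      have : (orderOf a).minFac ≤ p - 1 :=
        Nat.le_of_dvd (by omega) hq1
      omega
    have : x ∈ (Subgroup.centralizer ((P : Subgroup G) : Set G)).subgroupOf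
        (normalizer ((P : Subgroup G) : Set G)) := by
      rw [← Subgroup.normalizerMonoidHom_ker, MonoidHom.mem_ker, ← ha,
        ← orderOf_eq_one_iff]
      exact hord
    exact this
  haveI : (P : Subgroup G).FiniteIndex := Subgroup.finiteIndex_of_finite
  refine ⟨(MonoidHom.transferSylow P hP).ker, MonoidHom.normal_ker _, ?_⟩
  rw [(MonoidHom.ker_transferSylow_isComplement' P hP).symm.index_eq_card, hcardP]

universe u in
/-- Hall's conjugacy theorem for groups of squarefree order, by strong induction. -/
lemma key_conj : ∀ (n : ℕ) (G : Type u) [Group G] [Finite G], Nat.card G = n →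
    Squarefree n → ∀ H K : Subgroup G, Nat.card H = Nat.card K →
    ∃ g : G, MulAut.conj g • H = K := by
  intro n
  induction n using Nat.strong_induction_on with
  | _ n IH =>
  intro G _ _ hcard hsqn H K hHK
  subst hcard
  have hsq : Squarefree (Nat.card G) := hsqn
  by_cases hG1 : Nat.card G = 1
  · haveI : Subsingleton G := (Nat.card_eq_one_iff_unique.mp hG1).1
    exact ⟨1, Subsingleton.elim _ _⟩
  obtain ⟨N, hNnorm, hNidx⟩ := exists_normal_of_index_minFac G hsq hG1
  haveI := hNnorm
  set p := (Nat.card G).minFac with hpdef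
  have hp : p.Prime := Nat.minFac_prime hG1
  have hcardN : Nat.card N * p = Nat.card G := by rw [← hNidx]; exact Subgroup.card_mul_index N
  have hpN : ¬ p ∣ Nat.card N := by
    rintro ⟨c, hc⟩
    exact hp.not_isUnit (hsq p ⟨c, by rw [← hcardN, hc]; ring⟩)
  have hNlt : Nat.card N < Nat.card G := by
    have h2 : Nat.card N * 2 ≤ Nat.card N * p := Nat.mul_le_mul_left _ hp.two_le
    have hNpos : 0 < Nat.card N := Nat.card_pos
    omega
  have hsqN : Squarefree (Nat.card N) := hsq.squarefree_of_dvd (Subgroup.card_subgroup_dvd_card N)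
  have key_rel : ∀ J : Subgroup G, ¬ J ≤ N → N.relIndex J = p := by
    intro J hJ
    refine ((hp.eq_one_or_self_of_dvd _ (hNidx ▸ Subgroup.relIndex_dvd_index_of_normal N J))).resolve_left ?_
    exact fun h => hJ (Subgroup.relIndex_eq_one.mp h)
  by_cases hpH : p ∣ Nat.card H
  · -- `p` divides the common order
    have hpK : p ∣ Nat.card K := hHK ▸ hpH
    have cardinf : ∀ J : Subgroup G, ¬ J ≤ N → Nat.card (J ⊓ N : Subgroup G) * p = Nat.card J := by
      intro J hJ
      have h1 : Nat.card ((J ⊓ N).subgroupOf J) * ((J ⊓ N).subgroupOf J).index = Nat.card J :=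
        Subgroup.card_mul_index _
      have h2 : ((J ⊓ N).subgroupOf J).index = p := by
        rw [show ((J ⊓ N).subgroupOf J).index = (J ⊓ N).relIndex J from rfl,
          Subgroup.inf_relIndex_left, key_rel J hJ]
      rw [card_subgroupOf_of_le inf_le_left, h2] at h1
      exact h1
    have hHnotN : ¬ H ≤ N := fun h => hpN (hpH.trans (Subgroup.card_dvd_of_le h))
    have hKnotN : ¬ K ≤ N := fun h => hpN (hpK.trans (Subgroup.card_dvd_of_le h))
    have hH2 := cardinf H hHnotN
    have hK2 := cardinf K hKnotN
    have hinfcard : Nat.card (H ⊓ N : Subgroup G) = Nat.card (K ⊓ N : Subgroup G) :=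
      Nat.eq_of_mul_eq_mul_right hp.pos (by rw [hH2, hK2, hHK])
    obtain ⟨m, hm⟩ := IH (Nat.card N) hNlt N rfl hsqN ((H ⊓ N).subgroupOf N)
      ((K ⊓ N).subgroupOf N)
      (by rw [card_subgroupOf_of_le inf_le_right, card_subgroupOf_of_le inf_le_right, hinfcard])
    have hconjinf : MulAut.conj (m : G) • (H ⊓ N) = K ⊓ N :=
      conj_lift inf_le_right inf_le_right m hm
    set H₂ := MulAut.conj (m : G) • H with hH₂def
    have hH₂card : Nat.card H₂ = Nat.card H := card_conj_smul _ _
    have hH₂infN : H₂ ⊓ N = K ⊓ N := by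
      rw [← hconjinf, Subgroup.smul_inf, Subgroup.Normal.conj_smul_eq_self (↑m : G) N]
    set M := K ⊓ N with hMdef
    have hMH₂ : M ≤ H₂ := hH₂infN.symm.trans_le inf_le_left
    have hMK : M ≤ K := inf_le_left
    set L := normalizer (M : Set G) with hL
    have hnormmem : ∀ J : Subgroup G, J ⊓ N = M → J ≤ L := by
      intro J hJ h hh
      apply mem_normalizer_of_conj_smul_eq
      rw [← hJ, Subgroup.smul_inf, conj_smul_self hh, Subgroup.Normal.conj_smul_eq_self]
    have hH₂L : H₂ ≤ L := hnormmem H₂ hH₂infN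
    have hKL : K ≤ L := hnormmem K rfl
    have hML : M ≤ L := Subgroup.le_normalizer
    haveI hM'norm : (M.subgroupOf L).Normal := Subgroup.normal_in_normalizer
    set φ := QuotientGroup.mk' (M.subgroupOf L) with hφ
    have cardmap : ∀ S : Subgroup L, M.subgroupOf L ≤ S →
        Nat.card (S.map φ) * Nat.card (M.subgroupOf L) = Nat.card S := by
      intro S hS
      have h1 : Nat.card (S.map φ) * (S.map φ).index = Nat.card (L ⧸ M.subgroupOf L) :=
        Subgroup.card_mul_index _
      have h2 : (S.map φ).index = S.index :=
        Subgroup.index_map_eq S (QuotientGroup.mk'_surjective _)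
          (by rw [QuotientGroup.ker_mk']; exact hS)
      have h3 : Nat.card (L ⧸ M.subgroupOf L) * Nat.card (M.subgroupOf L) = Nat.card L :=
        (Subgroup.card_eq_card_quotient_mul_card_subgroup _).symm
      have h4 : Nat.card S * S.index = Nat.card L := Subgroup.card_mul_index S
      have hidx : S.index ≠ 0 := Subgroup.index_ne_zero_of_finite
      apply Nat.eq_of_mul_eq_mul_right (Nat.pos_of_ne_zero hidx)
      calc Nat.card (S.map φ) * Nat.card (M.subgroupOf L) * S.index
          = Nat.card (S.map φ) * (S.map φ).index * Nat.card (M.subgroupOf L) := by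
            rw [h2]; ring
        _ = Nat.card (L ⧸ M.subgroupOf L) * Nat.card (M.subgroupOf L) := by rw [h1]
        _ = Nat.card L := h3
        _ = Nat.card S * S.index := h4.symm
    have hcardM'p : Nat.card (M.subgroupOf L) * p = Nat.card H := by
      rw [card_subgroupOf_of_le hML, hMdef, hK2, hHK]
    have hMS_H : M.subgroupOf L ≤ H₂.subgroupOf L := fun x hx => hMH₂ hx
    have hMS_K : M.subgroupOf L ≤ K.subgroupOf L := fun x hx => hMK hx
    have hMpos : 0 < Nat.card (M.subgroupOf L) := Nat.card_pos
    have hcardH₃ : Nat.card ((H₂.subgroupOf L).map φ) = p := by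
      apply Nat.eq_of_mul_eq_mul_right hMpos
      rw [cardmap _ hMS_H, card_subgroupOf_of_le hH₂L, hH₂card, ← hcardM'p]
      ring
    have hcardK₃ : Nat.card ((K.subgroupOf L).map φ) = p := by
      apply Nat.eq_of_mul_eq_mul_right hMpos
      rw [cardmap _ hMS_K, card_subgroupOf_of_le hKL, ← hHK, ← hcardM'p]
      ring
    haveI : Fact p.Prime := ⟨hp⟩
    have hpQ : p ∣ Nat.card (L ⧸ M.subgroupOf L) :=
      hcardH₃ ▸ Subgroup.card_subgroup_dvd_card _
    have hQdvd : Nat.card (L ⧸ M.subgroupOf L) ∣ Nat.card G := by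
      refine dvd_trans ⟨Nat.card (M.subgroupOf L), ?_⟩ (Subgroup.card_subgroup_dvd_card L)
      exact Subgroup.card_eq_card_quotient_mul_card_subgroup _
    have hsqQ : Squarefree (Nat.card (L ⧸ M.subgroupOf L)) := hsq.squarefree_of_dvd hQdvd
    have hfaq : (Nat.card (L ⧸ M.subgroupOf L)).factorization p = 1 :=
      factorization_eq_one' hsqQ hp hpQ
    let P_H : Sylow p (L ⧸ M.subgroupOf L) := Sylow.ofCard _ (by rw [hcardH₃, hfaq, pow_one])
    let P_K : Sylow p (L ⧸ M.subgroupOf L) := Sylow.ofCard _ (by rw [hcardK₃, hfaq, pow_one])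
    obtain ⟨q, hq⟩ := MulAction.exists_smul_eq (L ⧸ M.subgroupOf L) P_H P_K
    obtain ⟨l, rfl⟩ := QuotientGroup.mk'_surjective (M.subgroupOf L) q
    have hq' : MulAut.conj (φ l) • ((H₂.subgroupOf L).map φ) = (K.subgroupOf L).map φ := by
      have := congrArg (fun P : Sylow p (L ⧸ M.subgroupOf L) => (P : Subgroup (L ⧸ M.subgroupOf L))) hq
      simpa [P_H, P_K, Sylow.smul_def, Sylow.pointwise_smul_def, hφ] using this
    have hSconj : MulAut.conj l • (H₂.subgroupOf L) = K.subgroupOf L := by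
      apply Subgroup.map_injective_of_ker_le φ ?_ ?_
      · rw [map_conj_smul]
        exact hq'
      · rw [hφ, QuotientGroup.ker_mk']
        have : MulAut.conj l • (M.subgroupOf L) = M.subgroupOf L := Subgroup.Normal.conj_smul_eq_self l _
        calc M.subgroupOf L = MulAut.conj l • (M.subgroupOf L) := this.symm
          _ ≤ MulAut.conj l • (H₂.subgroupOf L) :=
            Subgroup.pointwise_smul_le_pointwise_smul_iff.mpr hMS_H
      · rw [hφ, QuotientGroup.ker_mk']
        exact hMS_K
    have hfinal : MulAut.conj (l : G) • H₂ = K := conj_lift hH₂L hKL l hSconj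
    refine ⟨(l : G) * (m : G), ?_⟩
    rw [map_mul, mul_smul, ← hH₂def, hfinal]
  · -- `p` does not divide the common order
    have hpK : ¬ p ∣ Nat.card K := hHK ▸ hpH
    have hsub : ∀ J : Subgroup G, ¬ p ∣ Nat.card J → J ≤ N := by
      intro J hJ
      by_contra hnot
      exact hJ ((key_rel J hnot) ▸ Subgroup.index_dvd_card (N.subgroupOf J))
    have hHN := hsub H hpH
    have hKN := hsub K hpK
    obtain ⟨m, hm⟩ := IH (Nat.card N) hNlt N rfl hsqN (H.subgroupOf N) (K.subgroupOf N)
      (by rw [card_subgroupOf_of_le hHN, card_subgroupOf_of_le hKN, hHK])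
    exact ⟨m, conj_lift hHN hKN m hm⟩

/-- In a finite group of square-free order, two subgroups are conjugate if and only if
they have the same order. -/
theorem conjugate_iff_card_eq_of_squarefree (G : Type*) [Group G] [Fintype G]
    (hsq : Squarefree (Fintype.card G)) (H K : Subgroup G) :
    (∃ g : G, MulAut.conj g • H = K) ↔ Nat.card H = Nat.card K := by
  constructor
  · rintro ⟨g, rfl⟩
    exact (card_conj_smul g H).symm
  · intro h
    exact key_conj (Nat.card G) G rfl (by rwa [Nat.card_eq_fintype_card]) H K h
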